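/- Let d ≥ 2 and 1 ≤ p < d, and let λ : ℝ^d → ℝ be continuous and 2πℤ^d-periodic; let λ⁻ = min_{ℝ^d} λ and λ⁺ = max_{ℝ^d} λ (both attained, by continuity and periodicity). Then: (a) for every real p×d matrix T with T Tᵀ invertible, λ⁻ ≤ inf_{k ∈ S_T} λ(k) and sup_{k ∈ S_T} λ(k) ≤ λ⁺ (note 0 ∈ S_T, so S_T ≠ ∅); (b) for every ε > 0 there exists R > 0 such that for every integer p×d matrix T with T Tᵀ invertible and τ(T) ≥ R one has inf_{k ∈ S_T} λ(k) ≤ λ⁻ + ε and sup_{k ∈ S_T} λ(k) ≥ λ⁺ − ε. -/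

import Mathlib

open Matrix
open scoped Real BigOperators

/-- Euclidean norm of a vector in `ℝ^n`. -/
noncomputable def euclNorm {n : ℕ} (x : Fin n → ℝ) : ℝ := Real.sqrt (∑ i, (x i)^2)

open scoped Classical in
/-- Smallest eigenvalue of a (Hermitian) real matrix. -/
noncomputable def matLamMin {n : ℕ} (A : Matrix (Fin n) (Fin n) ℝ) : ℝ :=
  if h : A.IsHermitian then ⨅ i, h.eigenvalues i else 0

/-- `τ(T)`: square root of the smallest eigenvalue of `T * Tᵀ`. -/
noncomputable def matTau {p d : ℕ} (T : Matrix (Fin p) (Fin d) ℝ) : ℝ :=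
  Real.sqrt (matLamMin (T * Tᵀ))

open scoped Classical in
/-- `A^{-1/2}`: the inverse of the positive (semi)definite square root of `A`. -/
noncomputable def matInvSqrt {n : ℕ} (A : Matrix (Fin n) (Fin n) ℝ) : Matrix (Fin n) (Fin n) ℝ :=
  if h : A.PosSemidef then ((h.1.eigenvectorUnitary : Matrix (Fin n) (Fin n) ℝ) *
    diagonal ((↑) ∘ (√·) ∘ h.1.eigenvalues) * (star (h.1.eigenvectorUnitary : Matrix (Fin n) (Fin n) ℝ)))⁻¹ else 0

/-- The representative of `x` in `(-π, π]` modulo `2πℤ`. -/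
noncomputable def repPi (x : ℝ) : ℝ := x - 2*Real.pi*(⌈(x - Real.pi)/(2*Real.pi)⌉ : ℤ)

lemma matLamMin_le {n : ℕ} [NeZero n] {M : Matrix (Fin n) (Fin n) ℝ} (hM : M.IsHermitian)
    (i : Fin n) : matLamMin M ≤ hM.eigenvalues i := by
  rw [matLamMin, dif_pos hM]
  exact ciInf_le (Set.Finite.bddBelow (Set.finite_range _)) i

lemma rayleigh_min {n : ℕ} [NeZero n] {M : Matrix (Fin n) (Fin n) ℝ} (hM : M.IsHermitian)
    (x : Fin n → ℝ) : matLamMin M * (x ⬝ᵥ x) ≤ x ⬝ᵥ (M *ᵥ x) := by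
  classical
  set U : Matrix (Fin n) (Fin n) ℝ := (hM.eigenvectorUnitary : Matrix (Fin n) (Fin n) ℝ) with hU
  have hUstar : (star (hM.eigenvectorUnitary : Matrix (Fin n) (Fin n) ℝ)) = Uᵀ := by
    rw [Matrix.star_eq_conjTranspose, Matrix.conjTranspose_eq_transpose_of_trivial, hU]
  have hUU : U * Uᵀ = 1 := by
    have h := (Matrix.mem_unitaryGroup_iff).mp hM.eigenvectorUnitary.2
    rwa [hUstar] at h
  set y : Fin n → ℝ := Uᵀ *ᵥ x with hy
  have hdiag : (RCLike.ofReal ∘ hM.eigenvalues : Fin n → ℝ) = hM.eigenvalues := by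
    ext i; simp
  have h1 : x ⬝ᵥ (M *ᵥ x) = ∑ i, hM.eigenvalues i * (y i)^2 := by
    conv_lhs => rw [hM.spectral_theorem, Unitary.conjStarAlgAut_apply, hUstar, hdiag]
    rw [← Matrix.mulVec_mulVec, ← Matrix.mulVec_mulVec, Matrix.dotProduct_mulVec,
      ← Matrix.mulVec_transpose]
    simp only [dotProduct, Matrix.mulVec_diagonal]
    exact Finset.sum_congr rfl (fun i _ => by rw [hy]; ring)
  have h2 : x ⬝ᵥ x = ∑ i, (y i)^2 := by
    have hxy : x ⬝ᵥ x = y ⬝ᵥ y := by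
      have h0 : x ⬝ᵥ x = x ⬝ᵥ ((U * Uᵀ) *ᵥ x) := by rw [hUU, Matrix.one_mulVec]
      rw [h0, ← Matrix.mulVec_mulVec, Matrix.dotProduct_mulVec, ← Matrix.mulVec_transpose]
    rw [hxy]
    simp only [dotProduct]
    exact Finset.sum_congr rfl (fun i _ => by ring)
  rw [h1, h2, Finset.mul_sum]
  exact Finset.sum_le_sum fun i _ =>
    mul_le_mul_of_nonneg_right (matLamMin_le hM i) (sq_nonneg _)

lemma close_point {p d : ℕ} (hp : 1 ≤ p) (A : Matrix (Fin p) (Fin d) ℝ)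
    (hUnit : IsUnit (A * Aᵀ)) (hpos : 0 < matLamMin (A * Aᵀ)) (x : Fin d → ℝ) :
    ∃ k : Fin d → ℝ, (∀ i, ∃ n : ℤ, (A *ᵥ k) i = 2*π*n) ∧
      ∀ i, |k i - x i| ≤ Real.sqrt p * π / Real.sqrt (matLamMin (A * Aᵀ)) := by
  haveI : NeZero p := ⟨by omega⟩
  set M : Matrix (Fin p) (Fin p) ℝ := A * Aᵀ with hM
  have hdet : IsUnit M.det := (Matrix.isUnit_iff_isUnit_det M).mp hUnit
  have hMinv : M * M⁻¹ = 1 := Matrix.mul_nonsing_inv M hdet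
  have hH : M.IsHermitian := by
    have h := Matrix.isHermitian_mul_conjTranspose_self A
    rwa [Matrix.conjTranspose_eq_transpose_of_trivial] at h
  set lmin := matLamMin M with hlmin
  set w : Fin p → ℝ := fun i => 2*π*((round ((A *ᵥ x) i / (2*π)) : ℤ) : ℝ) - (A *ᵥ x) i with hw
  have hpi : (0:ℝ) < 2*π := by positivity
  have hwbd : ∀ i, |w i| ≤ π := by
    intro i
    have h1 := abs_sub_round ((A *ᵥ x) i / (2*π))
    have h2π : (2*π : ℝ) ≠ 0 := hpi.ne'
    have h3 : w i = -(2*π*((A *ᵥ x) i / (2*π) - (round ((A *ᵥ x) i / (2*π)) : ℤ))) := by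
      rw [hw]; field_simp
      ring
    rw [h3, abs_neg, abs_mul, abs_of_pos hpi]
    calc 2*π * |(A *ᵥ x) i / (2*π) - (round ((A *ᵥ x) i / (2*π)) : ℤ)| ≤ 2*π * (1/2) :=
          mul_le_mul_of_nonneg_left h1 hpi.le
      _ = π := by ring
  set u : Fin p → ℝ := M⁻¹ *ᵥ w with hu
  set dl : Fin d → ℝ := Aᵀ *ᵥ u with hdl
  have hMu : M *ᵥ u = w := by
    rw [hu, Matrix.mulVec_mulVec, hMinv, Matrix.one_mulVec]
  refine ⟨x + dl, fun i => ⟨round ((A *ᵥ x) i / (2*π)), ?_⟩, ?_⟩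
  · have hAdl : A *ᵥ dl = w := by
      rw [hdl, Matrix.mulVec_mulVec, ← hM, hMu]
    rw [Matrix.mulVec_add, hAdl]
    simp [hw]
  · have hquad : dl ⬝ᵥ dl = w ⬝ᵥ u := by
      rw [hdl, Matrix.dotProduct_mulVec, Matrix.vecMul_transpose, Matrix.mulVec_mulVec, ← hM, hMu]
    have hray : lmin * (u ⬝ᵥ u) ≤ u ⬝ᵥ w := by
      have h := rayleigh_min hH u
      rwa [hMu] at h
    have huu : (0:ℝ) ≤ u ⬝ᵥ u := Finset.sum_nonneg fun i _ => mul_self_nonneg _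
    have hww0 : (0:ℝ) ≤ w ⬝ᵥ w := Finset.sum_nonneg fun i _ => mul_self_nonneg _
    have hs : (0:ℝ) ≤ w ⬝ᵥ u := by
      rw [dotProduct_comm]
      exact le_trans (mul_nonneg hpos.le huu) hray
    have hcs : (w ⬝ᵥ u)^2 ≤ (w ⬝ᵥ w) * (u ⬝ᵥ u) := by
      have h := Finset.sum_mul_sq_le_sq_mul_sq Finset.univ w u
      simpa [dotProduct, pow_two] using h
    have hww : w ⬝ᵥ w ≤ p * π^2 := by
      calc w ⬝ᵥ w = ∑ i, w i * w i := rfl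
        _ ≤ ∑ _i : Fin p, π^2 := Finset.sum_le_sum fun i _ => by
            have := hwbd i; nlinarith [abs_nonneg (w i), neg_abs_le (w i), le_abs_self (w i)]
        _ = p * π^2 := by simp [Finset.sum_const, mul_comm]
    have hkey : (w ⬝ᵥ u) * lmin ≤ p * π^2 := by
      rcases eq_or_lt_of_le hs with h0 | h0
      · rw [← h0, zero_mul]; positivity
      · have hwu : (w ⬝ᵥ u) * lmin ≤ w ⬝ᵥ w := by
          have h1 : lmin * (u ⬝ᵥ u) ≤ w ⬝ᵥ u := hray.trans_eq (dotProduct_comm u w)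
          nlinarith [mul_le_mul_of_nonneg_left h1 hww0]
        linarith
    intro i
    have hcomp : (dl i)^2 ≤ w ⬝ᵥ u := by
      rw [← hquad]
      calc (dl i)^2 = dl i * dl i := sq _
        _ ≤ ∑ j, dl j * dl j := Finset.single_le_sum (f := fun j => dl j * dl j)
            (fun j _ => mul_self_nonneg _) (Finset.mem_univ i)
        _ = dl ⬝ᵥ dl := rfl
    have hdli : (dl i)^2 ≤ p * π^2 / lmin := by
      rw [le_div_iff₀ hpos]
      exact le_trans (mul_le_mul_of_nonneg_right hcomp hpos.le) hkey
    have habs : |dl i| ≤ Real.sqrt (p * π^2 / lmin) := by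
      rw [← Real.sqrt_sq_eq_abs]
      exact Real.sqrt_le_sqrt hdli
    have heq : Real.sqrt (p * π^2 / lmin) = Real.sqrt p * π / Real.sqrt lmin := by
      rw [Real.sqrt_div (by positivity), Real.sqrt_mul (by positivity),
        Real.sqrt_sq Real.pi_pos.le]
    have := heq ▸ habs
    simpa using this

/-- for a continuous `2πℤ^d`-periodic function `λ` with attained min `λ⁻` and
max `λ⁺`: (a) the inf/sup of `λ` over `S_T` lie between `λ⁻` and `λ⁺`; (b) as `τ(T) → ∞`
over integer matrices `T`, these inf/sup approach `λ⁻` and `λ⁺`. -/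
theorem stmt_2 (d p : ℕ) (hd : 2 ≤ d) (hp : 1 ≤ p) (hpd : p < d)
    (lam : (Fin d → ℝ) → ℝ) (hcont : Continuous lam)
    (hper : ∀ (k : Fin d → ℝ) (n : Fin d → ℤ), lam (k + fun i => 2*π*(n i : ℝ)) = lam k)
    (lamlo lamhi : ℝ)
    (hlo : IsLeast (Set.range lam) lamlo) (hhi : IsGreatest (Set.range lam) lamhi) :
    (∀ T : Matrix (Fin p) (Fin d) ℝ, IsUnit (T * Tᵀ) →
      lamlo ≤ sInf (lam '' {k | ∀ i, ∃ n : ℤ, (T *ᵥ k) i = 2*π*n}) ∧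
      sSup (lam '' {k | ∀ i, ∃ n : ℤ, (T *ᵥ k) i = 2*π*n}) ≤ lamhi) ∧
    (∀ ε > (0:ℝ), ∃ R > (0:ℝ), ∀ T : Matrix (Fin p) (Fin d) ℤ,
      IsUnit (T.map (Int.cast : ℤ → ℝ) * (T.map (Int.cast : ℤ → ℝ))ᵀ) →
      R ≤ matTau (T.map (Int.cast : ℤ → ℝ)) →
      sInf (lam '' {k | ∀ i, ∃ n : ℤ, (T.map (Int.cast : ℤ → ℝ) *ᵥ k) i = 2*π*n}) ≤ lamlo + ε ∧
      lamhi - ε ≤ sSup (lam '' {k | ∀ i, ∃ n : ℤ, (T.map (Int.cast : ℤ → ℝ) *ᵥ k) i = 2*π*n})) := by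
  constructor
  · -- part (a)
    intro T _hT
    have hne : (lam '' {k | ∀ i, ∃ n : ℤ, (T *ᵥ k) i = 2*π*n}).Nonempty := by
      refine ⟨lam 0, Set.mem_image_of_mem lam ?_⟩
      intro i
      exact ⟨0, by simp⟩
    constructor
    · exact le_csInf hne fun y hy => by
        obtain ⟨k, _, rfl⟩ := hy
        exact hlo.2 (Set.mem_range_self k)
    · exact csSup_le hne fun y hy => by
        obtain ⟨k, _, rfl⟩ := hy
        exact hhi.2 (Set.mem_range_self k)
  · -- part (b)
    intro ε hε
    obtain ⟨kmin, hkmin⟩ := hlo.1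
    obtain ⟨kmax, hkmax⟩ := hhi.1
    obtain ⟨η₁, hη₁, hc₁⟩ := Metric.continuousAt_iff.mp (hcont.continuousAt (x := kmin)) ε hε
    obtain ⟨η₂, hη₂, hc₂⟩ := Metric.continuousAt_iff.mp (hcont.continuousAt (x := kmax)) ε hε
    set η := min η₁ η₂ with hη
    have hηpos : 0 < η := lt_min hη₁ hη₂
    set c := Real.sqrt p * π with hc
    have hc0 : 0 ≤ c := by positivity
    refine ⟨(c + 1) / η, by positivity, ?_⟩
    intro T hUnit hR
    set A : Matrix (Fin p) (Fin d) ℝ := T.map (Int.cast : ℤ → ℝ) with hA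
    set lmin := matLamMin (A * Aᵀ) with hlmin
    have hRpos : (0:ℝ) < (c + 1) / η := by positivity
    have hsq : (0:ℝ) < Real.sqrt lmin := lt_of_lt_of_le hRpos hR
    have hlpos : 0 < lmin := by
      by_contra h
      push_neg at h
      rw [Real.sqrt_eq_zero'.mpr h] at hsq
      exact lt_irrefl _ hsq
    have hR' : (c + 1) / η ≤ Real.sqrt lmin := hR
    have hbound : c / Real.sqrt lmin < η := by
      have h1 : c / Real.sqrt lmin ≤ c / ((c + 1) / η) :=
        div_le_div_of_nonneg_left hc0 hRpos hR'
      have h2 : c / ((c + 1) / η) < η := by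
        rw [div_div_eq_mul_div, div_lt_iff₀ (by positivity : (0:ℝ) < c + 1)]
        nlinarith [hηpos, hc0]
      exact lt_of_le_of_lt h1 h2
    obtain ⟨k1, hk1mem, hk1d⟩ := close_point hp A hUnit hlpos kmin
    obtain ⟨k2, hk2mem, hk2d⟩ := close_point hp A hUnit hlpos kmax
    have hbddB : BddBelow (lam '' {k | ∀ i, ∃ n : ℤ, (A *ᵥ k) i = 2*π*n}) := by
      refine ⟨lamlo, fun y hy => ?_⟩
      obtain ⟨k, _, rfl⟩ := hy
      exact hlo.2 (Set.mem_range_self k)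
    have hbddA : BddAbove (lam '' {k | ∀ i, ∃ n : ℤ, (A *ᵥ k) i = 2*π*n}) := by
      refine ⟨lamhi, fun y hy => ?_⟩
      obtain ⟨k, _, rfl⟩ := hy
      exact hhi.2 (Set.mem_range_self k)
    have distk1 : dist k1 kmin < η := by
      rw [dist_pi_lt_iff hηpos]
      intro i
      rw [Real.dist_eq]
      exact lt_of_le_of_lt (hk1d i) hbound
    have distk2 : dist k2 kmax < η := by
      rw [dist_pi_lt_iff hηpos]
      intro i
      rw [Real.dist_eq]
      exact lt_of_le_of_lt (hk2d i) hbound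
    have h1 : lam k1 < lamlo + ε := by
      have h := hc₁ (lt_of_lt_of_le distk1 (min_le_left _ _))
      rw [Real.dist_eq, hkmin] at h
      have := (abs_lt.mp h).2
      linarith
    have h2 : lamhi - ε < lam k2 := by
      have h := hc₂ (lt_of_lt_of_le distk2 (min_le_right _ _))
      rw [Real.dist_eq, hkmax] at h
      have := (abs_lt.mp h).1
      linarith
    constructor
    · exact le_trans (csInf_le hbddB (Set.mem_image_of_mem lam hk1mem)) h1.le
    · exact le_trans h2.le (le_csSup hbddA (Set.mem_image_of_mem lam hk2mem))
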